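/- Let k, l be positive integers. The rational function binom(k+l,k)_{t^4} · [2]_{t^{2k}} · [2]_{t^{2l}} / [2]_{t^{2k+2l}} is a polynomial in t with integer coefficients, and its value at t = 1 equals 2·binom(k+l, k). -/
import Mathlib


open Polynomial

/-- The quantum number `[a]_{t^b} = 1 + t^b + ⋯ + t^{b(a-1)}` as a polynomial in `ℚ[t]`. -/
noncomputable def qnumPow (a b : ℕ) : Polynomial ℚ := ∑ i ∈ Finset.range a, X ^ (b * i)

/-- The Gaussian (quantum) binomial coefficient `binom(n,k)_q` as a polynomial in `ℤ[q]`,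
counting `k`-element subsets of `{0, …, n-1}` by inversions. -/
noncomputable def gaussBinom (n k : ℕ) : Polynomial ℤ :=
  ∑ S ∈ Finset.powersetCard k (Finset.range n), X ^ ((∑ i ∈ S, i) - k * (k - 1) / 2)

/-- The Gaussian binomial `binom(n,k)` in the variable `t^m`, over `ℚ`. -/
noncomputable def gaussBinomPow (n k m : ℕ) : Polynomial ℚ :=
  ((gaussBinom n k).map (Int.castRingHom ℚ)).comp (X ^ m)

/- ### Auxiliary development -/

/-- Unnormalized Gaussian binomial: sum over `k`-subsets of `range n` of `X ^ (sum)`. -/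
noncomputable def gaussAux (n k : ℕ) : Polynomial ℤ :=
  ∑ S ∈ Finset.powersetCard k (Finset.range n), X ^ (∑ i ∈ S, i)

lemma sum_lower : ∀ (k : ℕ) (S : Finset ℕ), S.card = k → k * (k - 1) / 2 ≤ ∑ i ∈ S, i := by
  intro k
  induction k with
  | zero => intro S _; simp
  | succ k ih =>
    intro S hS
    have hne : S.Nonempty := Finset.card_pos.mp (by omega)
    have hmem := S.max'_mem hne
    have hsub : S ⊆ Finset.range (S.max' hne + 1) := fun x hx =>
      Finset.mem_range.mpr (Nat.lt_succ_of_le (Finset.le_max' S x hx))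
    have hm : k ≤ S.max' hne := by
      have := Finset.card_le_card hsub
      rw [Finset.card_range, hS] at this; omega
    have hcard : (S.erase (S.max' hne)).card = k := by
      simp [Finset.card_erase_of_mem hmem, hS]
    have h2 := ih _ hcard
    have h3 : S.max' hne + ∑ i ∈ S.erase (S.max' hne), i = ∑ i ∈ S, i :=
      Finset.add_sum_erase S id hmem
    have hq : (k + 1) * (k + 1 - 1) / 2 = k * (k - 1) / 2 + k := by
      rw [← Finset.sum_range_id, ← Finset.sum_range_id, Finset.sum_range_succ]
    omega

lemma gaussAux_eq (n k : ℕ) :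
    gaussAux n k = X ^ (k * (k - 1) / 2) * gaussBinom n k := by
  unfold gaussAux gaussBinom
  rw [Finset.mul_sum]
  refine Finset.sum_congr rfl fun S hS => ?_
  have hc : S.card = k := (Finset.mem_powersetCard.mp hS).2
  rw [← pow_add]
  congr 1
  have := sum_lower k S hc
  omega

lemma gaussAux_pascalA (n k : ℕ) :
    gaussAux (n + 1) (k + 1) = gaussAux n (k + 1) + X ^ n * gaussAux n k := by
  unfold gaussAux
  rw [Finset.range_add_one, Finset.powersetCard_succ_insert Finset.notMem_range_self,
    Finset.sum_union]
  · congr 1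
    rw [Finset.sum_image, Finset.mul_sum]
    · refine Finset.sum_congr rfl fun S hS => ?_
      have hnS : n ∉ S := fun h =>
        Finset.notMem_range_self ((Finset.mem_powersetCard.mp hS).1 h)
      rw [Finset.sum_insert hnS, ← pow_add]
    · intro S hS T hT h
      have hnS : n ∉ S := fun hx =>
        Finset.notMem_range_self ((Finset.mem_powersetCard.mp hS).1 hx)
      have hnT : n ∉ T := fun hx =>
        Finset.notMem_range_self ((Finset.mem_powersetCard.mp hT).1 hx)
      rw [← Finset.erase_insert hnS, h, Finset.erase_insert hnT]
  · rw [Finset.disjoint_left]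
    intro S hS hS'
    obtain ⟨T, _, rfl⟩ := Finset.mem_image.mp hS'
    exact Finset.notMem_range_self
      ((Finset.mem_powersetCard.mp hS).1 (Finset.mem_insert_self n T))

/-- The successor embedding. -/
def succEmb : ℕ ↪ ℕ := ⟨Nat.succ, Nat.succ_injective⟩

lemma range_succ_eq (n : ℕ) :
    Finset.range (n + 1) = insert 0 ((Finset.range n).map succEmb) := by
  ext a
  simp only [Finset.mem_range, Finset.mem_insert, Finset.mem_map, succEmb,
    Function.Embedding.coeFn_mk]
  constructor
  · intro h
    cases a with
    | zero => exact Or.inl rfl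
    | succ a => exact Or.inr ⟨a, by omega, rfl⟩
  · rintro (rfl | ⟨b, hb, rfl⟩) <;> omega

lemma gaussAux_shift (n j : ℕ) :
    (∑ S ∈ Finset.powersetCard j ((Finset.range n).map succEmb),
      (X : Polynomial ℤ) ^ (∑ i ∈ S, i)) =
      X ^ j * ∑ S ∈ Finset.powersetCard j (Finset.range n),
        (X : Polynomial ℤ) ^ (∑ i ∈ S, i) := by
  rw [Finset.powersetCard_map, Finset.sum_map, Finset.mul_sum]
  refine Finset.sum_congr rfl fun S hS => ?_
  have hc : S.card = j := (Finset.mem_powersetCard.mp hS).2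
  have hmap : (Finset.mapEmbedding succEmb).toEmbedding S = S.map succEmb :=
    Finset.mapEmbedding_apply
  rw [hmap, Finset.sum_map, ← pow_add]
  congr 1
  have hstep : ∀ i ∈ S, succEmb i = i + 1 := fun i _ => rfl
  rw [Finset.sum_congr rfl hstep, Finset.sum_add_distrib, Finset.sum_const, hc,
    smul_eq_mul, mul_one]
  omega

lemma gaussAux_pascalB (n k : ℕ) :
    gaussAux (n + 1) (k + 1) = X ^ (k + 1) * gaussAux n (k + 1) + X ^ k * gaussAux n k := by
  have h0 : (0 : ℕ) ∉ (Finset.range n).map succEmb := by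
    simp [succEmb]
  unfold gaussAux
  rw [range_succ_eq, Finset.powersetCard_succ_insert h0, Finset.sum_union]
  · rw [gaussAux_shift n (k+1)]
    congr 1
    rw [Finset.sum_image, ← gaussAux_shift n k]
    · rw [Finset.powersetCard_map, Finset.sum_map, Finset.sum_map]
      refine Finset.sum_congr rfl fun S hS => ?_
      congr 1
      have hmap : ∀ (T : Finset ℕ), (Finset.mapEmbedding succEmb).toEmbedding T
          = T.map succEmb := fun T => Finset.mapEmbedding_apply
      have h0S : (0 : ℕ) ∉ (Finset.mapEmbedding succEmb).toEmbedding S := by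
        rw [hmap]; simp [succEmb]
      rw [Finset.sum_insert h0S, Nat.zero_add]
    · intro S hS T hT h
      have h0S : (0:ℕ) ∉ S := fun hx => h0 ((Finset.mem_powersetCard.mp hS).1 hx)
      have h0T : (0:ℕ) ∉ T := fun hx => h0 ((Finset.mem_powersetCard.mp hT).1 hx)
      rw [← Finset.erase_insert h0S, h, Finset.erase_insert h0T]
  · rw [Finset.disjoint_left]
    intro S hS hS'
    obtain ⟨T, _, rfl⟩ := Finset.mem_image.mp hS'
    exact h0 ((Finset.mem_powersetCard.mp hS).1 (Finset.mem_insert_self 0 T))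

lemma X_pow_ne_zero (m : ℕ) : (X : Polynomial ℤ) ^ m ≠ 0 :=
  pow_ne_zero _ X_ne_zero

lemma pascalA (j m : ℕ) :
    gaussBinom (j + m + 1) (j + 1) =
      gaussBinom (j + m) (j + 1) + X ^ m * gaussBinom (j + m) j := by
  have h1 := gaussAux_pascalA (j + m) j
  rw [gaussAux_eq, gaussAux_eq, gaussAux_eq] at h1
  apply mul_left_cancel₀ (X_pow_ne_zero ((j + 1) * (j + 1 - 1) / 2))
  rw [mul_add, h1]
  congr 1
  rw [← mul_assoc, ← mul_assoc, ← pow_add, ← pow_add]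
  congr 2
  have hq : (j + 1) * (j + 1 - 1) / 2 = j * (j - 1) / 2 + j := by
    rw [← Finset.sum_range_id, ← Finset.sum_range_id, Finset.sum_range_succ]
  omega

lemma pascalB (j m : ℕ) :
    gaussBinom (j + m + 1) (j + 1) =
      X ^ (j + 1) * gaussBinom (j + m) (j + 1) + gaussBinom (j + m) j := by
  have h1 := gaussAux_pascalB (j + m) j
  rw [gaussAux_eq, gaussAux_eq, gaussAux_eq] at h1
  apply mul_left_cancel₀ (X_pow_ne_zero ((j + 1) * (j + 1 - 1) / 2))
  rw [mul_add, h1]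
  congr 1
  · rw [← mul_assoc, ← mul_assoc, ← pow_add, ← pow_add]
    congr 2
    omega
  · rw [← mul_assoc, ← pow_add]
    congr 2
    have hq : (j + 1) * (j + 1 - 1) / 2 = j * (j - 1) / 2 + j := by
      rw [← Finset.sum_range_id, ← Finset.sum_range_id, Finset.sum_range_succ]
    omega

/-- The key polynomial identity over `ℤ`. -/
lemma key_identity (k l : ℕ) (hk : 0 < k) (hl : 0 < l) :
    (gaussBinom (k + l) k).comp (X ^ 4) * ((1 + X ^ (2 * k)) * (1 + X ^ (2 * l))) =
    (1 + X ^ (2 * k + 2 * l)) *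
      ((gaussBinom (k + l) k).comp (X ^ 4)
        + X ^ (2 * k) * (gaussBinom (k + l - 1) k).comp (X ^ 4)
        + X ^ (2 * l) * (gaussBinom (k + l - 1) (k - 1)).comp (X ^ 4)) := by
  obtain ⟨k', rfl⟩ : ∃ k', k = k' + 1 := ⟨k - 1, by omega⟩
  obtain ⟨l', rfl⟩ : ∃ l', l = l' + 1 := ⟨l - 1, by omega⟩
  have e1 : k' + 1 + (l' + 1) = k' + (l' + 1) + 1 := by omega
  have e2 : k' + 1 + (l' + 1) - 1 = k' + (l' + 1) := by omega
  have e3 : k' + 1 - 1 = k' := by omega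
  have hA := pascalA k' (l' + 1)
  have hB := pascalB k' (l' + 1)
  rw [← e1] at hA hB
  rw [e2, e3]
  -- compose with X ^ 4
  have hA4 := congrArg (fun p => p.comp ((X : Polynomial ℤ) ^ 4)) hA
  have hB4 := congrArg (fun p => p.comp ((X : Polynomial ℤ) ^ 4)) hB
  simp only [add_comp, mul_comp, pow_comp, X_comp] at hA4 hB4
  set B' := (gaussBinom (k' + 1 + (l' + 1)) (k' + 1)).comp ((X : Polynomial ℤ) ^ 4) with hB'
  set C' := (gaussBinom (k' + (l' + 1)) (k' + 1)).comp ((X : Polynomial ℤ) ^ 4) with hC'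
  set D' := (gaussBinom (k' + (l' + 1)) k').comp ((X : Polynomial ℤ) ^ 4) with hD'
  have hu : ((X : Polynomial ℤ) ^ 4) ^ (k' + 1) = (X ^ (2 * (k' + 1))) ^ 2 := by
    rw [← pow_mul, ← pow_mul]; congr 1; omega
  have hv : ((X : Polynomial ℤ) ^ 4) ^ (l' + 1) = (X ^ (2 * (l' + 1))) ^ 2 := by
    rw [← pow_mul, ← pow_mul]; congr 1; omega
  rw [hv] at hA4
  rw [hu] at hB4
  have huv : (X : Polynomial ℤ) ^ (2 * (k' + 1) + 2 * (l' + 1)) =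
      X ^ (2 * (k' + 1)) * X ^ (2 * (l' + 1)) := by
    rw [← pow_add]
  rw [huv]
  set u := (X : Polynomial ℤ) ^ (2 * (k' + 1))
  set v := (X : Polynomial ℤ) ^ (2 * (l' + 1))
  -- hA4 : B' = C' + v ^ 2 * D',  hB4 : B' = u ^ 2 * C' + D'
  linear_combination u * hA4 + v * hB4

lemma gaussBinom_eval_one (n k : ℕ) : (gaussBinom n k).eval 1 = (n.choose k : ℤ) := by
  unfold gaussBinom
  rw [eval_finset_sum]
  simp only [eval_pow, eval_X, one_pow]
  rw [Finset.sum_const, Finset.card_powersetCard, Finset.card_range]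
  simp

lemma qnumPow_two (b : ℕ) : qnumPow 2 b = 1 + X ^ b := by
  unfold qnumPow
  rw [Finset.sum_range_succ, Finset.sum_range_one]
  simp

theorem stmt_18 (k l : ℕ) (hk : 0 < k) (hl : 0 < l) :
    ∃ f : Polynomial ℤ,
      algebraMap (Polynomial ℚ) (RatFunc ℚ)
          (gaussBinomPow (k + l) k 4 * qnumPow 2 (2 * k) * qnumPow 2 (2 * l)) /
          algebraMap (Polynomial ℚ) (RatFunc ℚ) (qnumPow 2 (2 * k + 2 * l)) =
        algebraMap (Polynomial ℚ) (RatFunc ℚ) (f.map (Int.castRingHom ℚ)) ∧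
      f.eval 1 = 2 * ((k + l).choose k : ℤ) := by
  refine ⟨(gaussBinom (k + l) k).comp (X ^ 4)
      + X ^ (2 * k) * (gaussBinom (k + l - 1) k).comp (X ^ 4)
      + X ^ (2 * l) * (gaussBinom (k + l - 1) (k - 1)).comp (X ^ 4), ?_, ?_⟩
  · -- rational function identity
    have hpoly : gaussBinomPow (k + l) k 4 * qnumPow 2 (2 * k) * qnumPow 2 (2 * l) =
        ((gaussBinom (k + l) k).comp (X ^ 4)
          + X ^ (2 * k) * (gaussBinom (k + l - 1) k).comp (X ^ 4)
          + X ^ (2 * l) * (gaussBinom (k + l - 1) (k - 1)).comp (X ^ 4)).map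
            (Int.castRingHom ℚ) * qnumPow 2 (2 * k + 2 * l) := by
      have hkey := congrArg (Polynomial.map (Int.castRingHom ℚ)) (key_identity k l hk hl)
      simp only [Polynomial.map_mul, Polynomial.map_add, Polynomial.map_one,
        Polynomial.map_pow, Polynomial.map_X, Polynomial.map_comp] at hkey ⊢
      rw [qnumPow_two, qnumPow_two, qnumPow_two]
      unfold gaussBinomPow
      linear_combination hkey
    have hQ : qnumPow 2 (2 * k + 2 * l) ≠ 0 := by
      intro h
      have := congrArg (fun p => Polynomial.eval (1 : ℚ) p) h
      simp [qnumPow_two] at this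
    have hQ' : algebraMap (Polynomial ℚ) (RatFunc ℚ) (qnumPow 2 (2 * k + 2 * l)) ≠ 0 :=
      RatFunc.algebraMap_ne_zero hQ
    rw [div_eq_iff hQ', ← map_mul]
    exact congrArg _ hpoly
  · -- evaluation at 1
    simp only [eval_add, eval_mul, eval_comp, eval_pow, eval_X, one_pow,
      gaussBinom_eval_one]
    have hch : (k + l - 1).choose k + (k + l - 1).choose (k - 1) = (k + l).choose k := by
      obtain ⟨k', rfl⟩ : ∃ k', k = k' + 1 := ⟨k - 1, by omega⟩
      have e2 : k' + 1 + l - 1 = k' + l := by omega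
      have e3 : k' + 1 - 1 = k' := by omega
      rw [e2, e3, show k' + 1 + l = (k' + l) + 1 from by omega, Nat.choose_succ_succ']
      omega
    push_cast [← hch]
    ring
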